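/- Let q be odd and let g ∈ GL_{2m+1}(q) act cyclically on F_q^{2m+1} with characteristic polynomial (t - ε)^{2m+1}, where ε = ±1. Then there exist involutions h, h' ∈ GL_{2m+1}(q) with hgh⁻¹ = g⁻¹ = h'g(h')⁻¹ and det h = (-1)^m, det h' = (-1)^{m+1}; in particular g is reversed both by an involution of determinant 1 and by one of determinant -1. -/

import Mathlib

open Equiv Equiv.Perm Matrix Polynomial Finset


lemma sign_revPerm_step (k : ℕ) :
    sign (Fin.revPerm : Perm (Fin (k+2))) = - sign (Fin.revPerm : Perm (Fin k)) := by
  have he : (Fin.revPerm : Perm (Fin (k+2))) =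
      Equiv.Perm.decomposeFin.symm (Fin.last (k+1),
        (Equiv.permCongr finSuccEquivLast.symm)
          (Equiv.optionCongr (Fin.revPerm : Perm (Fin k)))) := by
    ext x
    refine Fin.cases ?_ ?_ x
    · rw [Equiv.Perm.decomposeFin_symm_apply_zero]
      simp [Fin.val_rev]
    · intro i
      rw [Equiv.Perm.decomposeFin_symm_apply_succ]
      refine Fin.lastCases ?_ ?_ i
      · have h1 : (Equiv.permCongr finSuccEquivLast.symm)
            (Equiv.optionCongr (Fin.revPerm : Perm (Fin k))) (Fin.last k) = Fin.last k := by
          simp [Equiv.permCongr_apply, finSuccEquivLast_last]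
        rw [h1]
        have h2 : (Fin.last k).succ = Fin.last (k+1) := by ext; simp
        rw [h2, Equiv.swap_apply_right]
        simp [Fin.val_rev]
      · intro j
        have h1 : (Equiv.permCongr finSuccEquivLast.symm)
            (Equiv.optionCongr (Fin.revPerm : Perm (Fin k))) (Fin.castSucc j)
            = Fin.castSucc (Fin.rev j) := by
          simp [Equiv.permCongr_apply, finSuccEquivLast_castSucc, finSuccEquivLast_symm_some]
        rw [h1]
        have hj := j.isLt
        rw [Equiv.swap_apply_of_ne_of_ne]
        · simp only [Fin.val_rev, Fin.coe_castSucc, Fin.val_succ, Fin.revPerm_apply]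
          omega
        · intro hc
          have := congrArg Fin.val hc
          simp at this
        · intro hc
          have := congrArg Fin.val hc
          simp [Fin.val_rev] at this
          omega
  rw [he, Equiv.Perm.decomposeFin.symm_sign, sign_permCongr, Equiv.optionCongr_sign]
  have : (Fin.last (k+1)) ≠ 0 := by
    intro hc; have := congrArg Fin.val hc; simp at this
  simp [this]

lemma sign_revPerm_odd (m : ℕ) :
    sign (Fin.revPerm : Perm (Fin (2*m+1))) = (-1)^m := by
  induction m with
  | zero =>
    have : (Fin.revPerm : Perm (Fin (2*0+1))) = 1 := by
      ext x; fin_cases x; rfl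
    simp [this]
  | succ m ih =>
    have h2 := sign_revPerm_step (2*m+1)
    rw [ih] at h2
    calc sign (Fin.revPerm : Perm (Fin (2*(m+1)+1)))
        = sign (Fin.revPerm : Perm (Fin (2*m+1+2))) := rfl
      _ = -(-1)^m := h2
      _ = (-1)^(m+1) := by rw [pow_succ, mul_neg_one]


section helpers

variable {F : Type*} [Field F]

lemma sum_mulVec' {n : ℕ} (s : Finset ℕ) (f : ℕ → Matrix (Fin n) (Fin n) F)
    (v : Fin n → F) : (∑ k ∈ s, f k).mulVec v = ∑ k ∈ s, (f k).mulVec v := by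
  classical
  induction s using Finset.induction with
  | empty => simp [Matrix.zero_mulVec]
  | insert _ _ h ih => simp [Finset.sum_insert h, Matrix.add_mulVec, ih]

end helpers

theorem stmt_11 {F : Type*} [Field F] [Fintype F] (hq : Odd (Fintype.card F))
    (m : ℕ) (ε : F) (hε : ε = 1 ∨ ε = -1) (g : GL (Fin (2 * m + 1)) F)
    (hcyc : ∃ v : Fin (2 * m + 1) → F,
      LinearIndependent F (fun i : Fin (2 * m + 1) =>
        (((g : Matrix (Fin (2 * m + 1)) (Fin (2 * m + 1)) F)) ^ (i : ℕ)).mulVec v))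
    (hcp : Matrix.charpoly (g : Matrix (Fin (2 * m + 1)) (Fin (2 * m + 1)) F) =
      (Polynomial.X - Polynomial.C ε) ^ (2 * m + 1)) :
    ∃ h h' : GL (Fin (2 * m + 1)) F,
      h ^ 2 = 1 ∧ h' ^ 2 = 1 ∧ h * g * h⁻¹ = g⁻¹ ∧ h' * g * h'⁻¹ = g⁻¹ ∧
      (h : Matrix (Fin (2 * m + 1)) (Fin (2 * m + 1)) F).det = (-1 : F) ^ m ∧
      (h' : Matrix (Fin (2 * m + 1)) (Fin (2 * m + 1)) F).det = (-1 : F) ^ (m + 1) := by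
  classical
  have hε2 : ε * ε = 1 := by rcases hε with h | h <;> (rw [h]; ring)
  set A : Matrix (Fin (2 * m + 1)) (Fin (2 * m + 1)) F :=
    (g : Matrix (Fin (2 * m + 1)) (Fin (2 * m + 1)) F) with hA
  obtain ⟨v, hv⟩ := hcyc
  set A' : Matrix (Fin (2 * m + 1)) (Fin (2 * m + 1)) F :=
    ((g⁻¹ : GL (Fin (2 * m + 1)) F) : Matrix (Fin (2 * m + 1)) (Fin (2 * m + 1)) F) with hA'
  have hA'A : A' * A = 1 := by
    rw [hA', hA, ← Units.val_mul, inv_mul_cancel, Units.val_one]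
  -- basis
  have hcard : Fintype.card (Fin (2 * m + 1)) = Module.finrank F (Fin (2 * m + 1) → F) := by
    simp
  let b : Module.Basis (Fin (2 * m + 1)) F (Fin (2 * m + 1) → F) :=
    basisOfLinearIndependentOfCardEqFinrank hv hcard
  have hb : ∀ i : Fin (2 * m + 1), b i = (A ^ (i : ℕ)).mulVec v := by
    intro i
    show (basisOfLinearIndependentOfCardEqFinrank hv hcard) i = _
    rw [coe_basisOfLinearIndependentOfCardEqFinrank]
  -- the reversing linear map and its matrix
  let hLin : (Fin (2 * m + 1) → F) ≃ₗ[F] (Fin (2 * m + 1) → F) := b.equiv b Fin.revPerm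
  have hLinb : ∀ i, hLin (b i) = b (Fin.rev i) := by
    intro i
    simp [hLin, Module.Basis.equiv_apply]
  set H : Matrix (Fin (2 * m + 1)) (Fin (2 * m + 1)) F :=
    LinearMap.toMatrix' (hLin : (Fin (2 * m + 1) → F) →ₗ[F] (Fin (2 * m + 1) → F)) with hH
  have hHmul : ∀ x, H.mulVec x = hLin x := by
    intro x
    rw [← Matrix.toLin'_apply, hH, Matrix.toLin'_toMatrix']
    rfl
  have hH2 : H * H = 1 := by
    have hcomp : (hLin : (Fin (2 * m + 1) → F) →ₗ[F] _) ∘ₗ (hLin : (Fin (2 * m + 1) → F) →ₗ[F] _)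
        = LinearMap.id := by
      apply b.ext
      intro i
      simp only [LinearMap.comp_apply, LinearMap.id_apply, LinearEquiv.coe_coe]
      rw [hLinb i, hLinb, Fin.rev_rev]
    rw [hH, ← LinearMap.toMatrix'_comp, hcomp, LinearMap.toMatrix'_id]
  -- key mapping property
  have hkey : ∀ k : ℕ, k ≤ 2 * m → H.mulVec ((A ^ k).mulVec v) = (A ^ (2 * m - k)).mulVec v := by
    intro k hk
    have h1 : (A ^ k).mulVec v = b ⟨k, by omega⟩ := by rw [hb]
    rw [h1, hHmul, hLinb, hb]
    congr 1
    rw [Fin.val_rev]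
    simp
  -- Cayley-Hamilton data
  set P : Polynomial F := (X + C (-ε)) ^ (2 * m + 1) with hP
  have hPA : (Polynomial.aeval A) P = 0 := by
    have h0 := Matrix.aeval_self_charpoly A
    rw [hcp] at h0
    rw [hP, map_neg, ← sub_eq_add_neg]
    exact h0
  have hPdeg : P.natDegree = 2 * m + 1 := by
    rw [hP, natDegree_pow, natDegree_X_add_C, mul_one]
  have hcoeff : ∀ k, P.coeff k = (-ε) ^ (2 * m + 1 - k) * ((2 * m + 1).choose k : F) := by
    intro k
    rw [hP, coeff_X_add_C_pow]
  have hsum0 : ∑ k ∈ range (2 * m + 2), P.coeff k • A ^ k = 0 := by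
    have := Polynomial.aeval_eq_sum_range' (n := 2 * m + 2) (by rw [hPdeg]; omega) A
    rw [← this, hPA]
  have htop : P.coeff (2 * m + 1) = 1 := by
    rw [hcoeff]; simp
  have hAn : A ^ (2 * m + 1) = ∑ k ∈ range (2 * m + 1), (-(P.coeff k)) • A ^ k := by
    rw [Finset.sum_range_succ, htop, one_smul] at hsum0
    have h2 : A ^ (2 * m + 1) = -∑ x ∈ range (2 * m + 1), P.coeff x • A ^ x :=
      eq_neg_of_add_eq_zero_right hsum0
    rw [h2, ← Finset.sum_neg_distrib]
    exact Finset.sum_congr rfl fun k _ => (neg_smul _ _).symm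
  -- binomial expansion of (1 + (-ε) • A) ^ (2m+1)
  have hbin : (1 + (-ε) • A) ^ (2 * m + 1)
      = ∑ k ∈ range (2 * m + 2), ((-ε) ^ k * ((2 * m + 1).choose k : F)) • A ^ k := by
    have hc : Commute ((-ε) • A) (1 : Matrix (Fin (2 * m + 1)) (Fin (2 * m + 1)) F) :=
      Commute.one_right _
    rw [show (1 : Matrix (Fin (2 * m + 1)) (Fin (2 * m + 1)) F) + (-ε) • A
        = (-ε) • A + 1 from add_comm _ _]
    rw [hc.add_pow]
    apply Finset.sum_congr rfl
    intro k _
    have hterm : A ^ k * ((2 * m + 1).choose k : Matrix (Fin (2 * m + 1)) (Fin (2 * m + 1)) F)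
        = (((2 * m + 1).choose k : F)) • A ^ k := by
      rw [← (Nat.cast_commute ((2 * m + 1).choose k) (A ^ k)).eq, ← nsmul_eq_mul,
        Nat.cast_smul_eq_nsmul]
    rw [one_pow, mul_one, _root_.smul_pow, smul_mul_assoc, hterm, smul_smul]
  -- (1 + (-ε) A)^(2m+1) = 0
  have hCH2 : (1 + (-ε) • A) ^ (2 * m + 1) = 0 := by
    have hfac : (1 : Matrix (Fin (2 * m + 1)) (Fin (2 * m + 1)) F) + (-ε) • A
        = (-ε) • (A + (-ε) • (1 : Matrix (Fin (2 * m + 1)) (Fin (2 * m + 1)) F)) := by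
      rw [smul_add, smul_smul, neg_mul_neg, hε2, one_smul]
      exact add_comm _ _
    have haevalP : (Polynomial.aeval A) P = (A + (-ε) • 1) ^ (2 * m + 1) := by
      rw [hP, map_pow, map_add, aeval_X, aeval_C, Algebra.algebraMap_eq_smul_one]
    rw [hfac, _root_.smul_pow, ← haevalP, hPA, smul_zero]
  -- reversed identity
  have hrev : ∑ k ∈ range (2 * m + 1), (-(P.coeff k)) • A ^ (2 * m + 1 - k) = 1 := by
    have h1 : ∑ k ∈ range (2 * m + 1), P.coeff k • A ^ (2 * m + 1 - k) = -1 := by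
      have h2 := Finset.sum_range_reflect (fun k => P.coeff k • A ^ (2 * m + 1 - k)) (2 * m + 1)
      rw [← h2]
      have h3 : ∀ j ∈ range (2 * m + 1),
          P.coeff (2 * m + 1 - 1 - j) • A ^ (2 * m + 1 - (2 * m + 1 - 1 - j))
          = ((-ε) ^ (j + 1) * ((2 * m + 1).choose (j + 1) : F)) • A ^ (j + 1) := by
        intro j hj
        rw [Finset.mem_range] at hj
        rw [hcoeff]
        rw [show 2 * m + 1 - (2 * m + 1 - 1 - j) = j + 1 from by omega]
        rw [show 2 * m + 1 - 1 - j = 2 * m + 1 - (j + 1) from by omega]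
        rw [Nat.choose_symm (by omega)]
      rw [Finset.sum_congr rfl h3]
      have h4 := Finset.sum_range_succ'
        (fun k => ((-ε) ^ k * ((2 * m + 1).choose k : F)) • A ^ k) (2 * m + 1)
      rw [← hbin, hCH2] at h4
      -- h4 : 0 = ∑_{j ∈ range (2m+1)} f (j+1) + f 0
      have h5 : ((-ε) ^ 0 * ((2 * m + 1).choose 0 : F)) • A ^ 0
          = (1 : Matrix (Fin (2 * m + 1)) (Fin (2 * m + 1)) F) := by simp
      rw [h5] at h4
      exact eq_neg_of_add_eq_zero_left h4.symm
    calc ∑ k ∈ range (2 * m + 1), (-(P.coeff k)) • A ^ (2 * m + 1 - k)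
        = -∑ k ∈ range (2 * m + 1), P.coeff k • A ^ (2 * m + 1 - k) := by
          rw [← Finset.sum_neg_distrib]
          exact Finset.sum_congr rfl fun k _ => neg_smul _ _
      _ = 1 := by rw [h1, neg_neg]
  -- main commutation relation
  have HA : H * A = A' * H := by
    have hto : Matrix.toLin' (H * A) = Matrix.toLin' (A' * H) := by
      apply b.ext
      intro i
      rw [Matrix.toLin'_apply, Matrix.toLin'_apply, hb]
      have lhs1 : (H * A).mulVec ((A ^ (i : ℕ)).mulVec v)
          = H.mulVec ((A ^ ((i : ℕ) + 1)).mulVec v) := by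
        rw [Matrix.mulVec_mulVec, Matrix.mulVec_mulVec, mul_assoc, ← pow_succ']
      have rhs1 : (A' * H).mulVec ((A ^ (i : ℕ)).mulVec v)
          = A'.mulVec ((A ^ (2 * m - (i : ℕ))).mulVec v) := by
        rw [← Matrix.mulVec_mulVec, hkey (i : ℕ) (by omega)]
      rw [lhs1, rhs1]
      by_cases hi : (i : ℕ) < 2 * m
      · rw [hkey ((i : ℕ) + 1) (by omega)]
        rw [show (2 * m - (i : ℕ)) = (2 * m - ((i : ℕ) + 1)) + 1 from by omega, pow_succ']
        rw [Matrix.mulVec_mulVec, ← mul_assoc, hA'A, one_mul]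
      · have hi2 : (i : ℕ) = 2 * m := by omega
        rw [hi2]
        rw [Nat.sub_self, pow_zero, Matrix.one_mulVec]
        -- goal : H *ᵥ (A ^ (2m+1) *ᵥ v) = A' *ᵥ v
        rw [hAn, sum_mulVec']
        have hterm : ∀ k ∈ range (2 * m + 1),
            ((-(P.coeff k)) • A ^ k).mulVec v = (-(P.coeff k)) • ((A ^ k).mulVec v) := by
          intro k _
          rw [smul_mulVec]
        rw [Finset.sum_congr rfl hterm, hHmul, map_sum]
        have hterm2 : ∀ k ∈ range (2 * m + 1),
            hLin ((-(P.coeff k)) • ((A ^ k).mulVec v))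
            = (-(P.coeff k)) • ((A ^ (2 * m - k)).mulVec v) := by
          intro k hk
          rw [Finset.mem_range] at hk
          rw [_root_.map_smul, ← hHmul, hkey k (by omega)]
        rw [Finset.sum_congr rfl hterm2]
        -- now show this sum equals A' *ᵥ v
        set X : Fin (2 * m + 1) → F :=
          ∑ k ∈ range (2 * m + 1), (-(P.coeff k)) • ((A ^ (2 * m - k)).mulVec v) with hX
        have hAX : A.mulVec X = v := by
          have hX2 : X = (∑ k ∈ range (2 * m + 1), (-(P.coeff k)) • A ^ (2 * m - k)).mulVec v := by
            rw [sum_mulVec']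
            exact Finset.sum_congr rfl fun k _ => (smul_mulVec _ _ _).symm
          rw [hX2, Matrix.mulVec_mulVec, Finset.mul_sum]
          have : ∀ k ∈ range (2 * m + 1),
              A * ((-(P.coeff k)) • A ^ (2 * m - k)) = (-(P.coeff k)) • A ^ (2 * m + 1 - k) := by
            intro k hk
            rw [Finset.mem_range] at hk
            rw [mul_smul_comm, ← pow_succ']
            congr 2
            omega
          rw [Finset.sum_congr rfl this, hrev, Matrix.one_mulVec]
        calc X = (A' * A).mulVec X := by rw [hA'A, Matrix.one_mulVec]
          _ = A'.mulVec (A.mulVec X) := by rw [Matrix.mulVec_mulVec]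
          _ = A'.mulVec v := by rw [hAX]
    exact Matrix.toLin'.injective hto
  -- determinant of H
  have hdetH : H.det = (-1 : F) ^ m := by
    have h1 : H.det = LinearMap.det (hLin : (Fin (2 * m + 1) → F) →ₗ[F] _) :=
      LinearMap.det_toMatrix' _
    have h2 : LinearMap.toMatrix b b (hLin : (Fin (2 * m + 1) → F) →ₗ[F] _)
        = (Fin.revPerm : Perm (Fin (2 * m + 1))).permMatrix F := by
      ext i j
      rw [LinearMap.toMatrix_apply, LinearEquiv.coe_coe, hLinb, Module.Basis.repr_self]
      have hiff : (Fin.rev j = i) ↔ (Fin.rev i = j) := by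
        constructor
        · intro h; rw [← h, Fin.rev_rev]
        · intro h; rw [← h, Fin.rev_rev]
      simp only [Equiv.Perm.permMatrix, PEquiv.toMatrix_apply, Equiv.toPEquiv_apply,
        Option.mem_def, Option.some.injEq, Finsupp.single_apply, Fin.revPerm_apply]
      rw [if_congr hiff rfl rfl]
    rw [h1, ← LinearMap.det_toMatrix b, h2, Matrix.det_permutation, sign_revPerm_odd]
    push_cast
    ring
  -- assemble units
  have hUg : (⟨H, H, hH2, hH2⟩ : GL (Fin (2 * m + 1)) F) * g
      = g⁻¹ * (⟨H, H, hH2, hH2⟩ : GL (Fin (2 * m + 1)) F) := by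
    apply Units.ext
    rw [Units.val_mul, Units.val_mul]
    exact HA
  have hUconj : (⟨H, H, hH2, hH2⟩ : GL (Fin (2 * m + 1)) F) * g
      * (⟨H, H, hH2, hH2⟩ : GL (Fin (2 * m + 1)) F)⁻¹ = g⁻¹ := by
    rw [hUg, mul_assoc, mul_inv_cancel, mul_one]
  refine ⟨⟨H, H, hH2, hH2⟩, -⟨H, H, hH2, hH2⟩, ?_, ?_, hUconj, ?_, ?_, ?_⟩
  · exact Units.ext (by rw [Units.val_pow_eq_pow_val, sq]; exact hH2)
  · apply Units.ext
    rw [Units.val_pow_eq_pow_val, Units.val_neg, Units.val_one, sq, neg_mul_neg]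
    exact hH2
  · rw [inv_neg, neg_mul, neg_mul_neg]
    exact hUconj
  · exact hdetH
  · show ((-⟨H, H, hH2, hH2⟩ : GL (Fin (2 * m + 1)) F) :
        Matrix (Fin (2 * m + 1)) (Fin (2 * m + 1)) F).det = (-1 : F) ^ (m + 1)
    rw [Units.val_neg]
    show (-H).det = _
    rw [Matrix.det_neg, hdetH, Fintype.card_fin]
    have : (-1 : F) ^ (2 * m + 1) = -1 := Odd.neg_one_pow ⟨m, by ring⟩
    rw [this, pow_succ]
    ring
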